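/- arXiv:1812.05128 — 3 statements merged into one kernel-verified Lean document; each statement's English description precedes it below -/
import Mathlib

section
/- If X is an ℝ^d-valued Lévy process in a filtration F (no killing, ζ = ∞), and e is an exponentially distributed random variable with strictly positive mean, independent of F_∞, then the process k_e(X), equal to X on [0, e) and to ∂ on [e, ∞), is a possibly killed Lévy process in the progressive enlargement of F by e (the smallest enlargement of F making e a stopping time). -/
open MeasureTheory ProbabilityTheory Filter Set
open scoped NNReal ENNReal

noncomputable section

instance optMS {α : Type*} [MeasurableSpace α] : MeasurableSpace (Option α) :=
  MeasurableSpace.comap (fun o => o.elim (Sum.inl ()) Sum.inr) inferInstance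

variable {Ω : Type*} {mΩ : MeasurableSpace Ω} {d : ℕ}

/-- Extend a nonnegative Borel function `g` on `ℝ^d` by `0` at the cemetery `∂ = none`. -/
def kval (g : (Fin d → ℝ) → ℝ≥0∞) : Option (Fin d → ℝ) → ℝ≥0∞ := fun x => x.elim 0 g

/-- Difference in `ℝ^d ∪ {∂}`, with the convention `∂ ± x = x ± ∂ = ∂`. -/
def osub : Option (Fin d → ℝ) → Option (Fin d → ℝ) → Option (Fin d → ℝ)
  | some a, some b => some (a - b)
  | _, _ => none

/-- Sum in `ℝ^d ∪ {∂}`, with the convention `∂ ± x = x ± ∂ = ∂`. -/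
def oadd : Option (Fin d → ℝ) → Option (Fin d → ℝ) → Option (Fin d → ℝ)
  | some a, some b => some (a + b)
  | _, _ => none

/-- The lifetime `ζ := inf {t > 0 : X t = ∂}` (`= ∞` if the set is empty). -/
def lifetime (X : ℝ≥0 → Ω → Option (Fin d → ℝ)) (ω : Ω) : ℝ≥0∞ :=
  sInf ((fun s : ℝ≥0 => (s : ℝ≥0∞)) '' {s : ℝ≥0 | 0 < s ∧ X s ω = none})

/-- The `ℝ^d`-valued path of `X`, read as `0` at the cemetery (used only to express
path regularity on `[0, ζ)`). -/
def pkPath (X : ℝ≥0 → Ω → Option (Fin d → ℝ)) (ω : Ω) (t : ℝ≥0) : Fin d → ℝ :=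
  (X t ω).getD 0

/-- A possibly killed `ℝ^d`-valued Lévy process `X` in the filtration `F` under `P`. -/
structure IsPKLevy (P : Measure Ω) (F : Filtration ℝ≥0 mΩ)
    (X : ℝ≥0 → Ω → Option (Fin d → ℝ)) : Prop where
  adapted : ∀ t, Measurable[F t] (X t)
  dead : ∀ ω, ∀ t : ℝ≥0, lifetime X ω ≤ t → X t ω = none
  rightCont : ∀ ω, ∀ t : ℝ≥0, (t : ℝ≥0∞) < lifetime X ω →
    ContinuousWithinAt (pkPath X ω) (Set.Ici t) t
  leftLim : ∀ ω, ∀ t : ℝ≥0, 0 < t → (t : ℝ≥0∞) ≤ lifetime X ω →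
    ∃ l, Tendsto (pkPath X ω) (nhdsWithin t (Set.Iio t)) (nhds l)
  init : ∀ᵐ ω ∂P, X 0 ω = some 0
  alive : ∀ᵐ ω ∂P, 0 < lifetime X ω
  increments : ∀ s t : ℝ≥0, s ≤ t → ∀ g : (Fin d → ℝ) → ℝ≥0∞, Measurable g →
    ∀ A : Set Ω, MeasurableSet[F s] A →
      ∫⁻ ω in A, kval g (osub (X t ω) (X s ω)) ∂P
        = P (A ∩ {ω | (s : ℝ≥0∞) < lifetime X ω}) * ∫⁻ ω, kval g (X (t - s) ω) ∂P

/-- An `[0,∞]`-valued stopping time of the filtration `F`. -/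
def IsStoppingTimeE (F : Filtration ℝ≥0 mΩ) (T : Ω → ℝ≥0∞) : Prop :=
  ∀ t : ℝ≥0, MeasurableSet[F t] {ω | T ω ≤ (t : ℝ≥0∞)}

/-- The law of `X` observed on the random interval `[0, T] ∩ [0, ∞)`: outside the interval
the observed process is set to the adjoined state `↑` (the outer `none`). -/
def restLawIcc (P : Measure Ω) (X : ℝ≥0 → Ω → Option (Fin d → ℝ)) (T : Ω → ℝ≥0∞) :
    Measure (ℝ≥0 → Option (Option (Fin d → ℝ))) :=
  Measure.map (fun ω t => if (t : ℝ≥0∞) ≤ T ω then some (X t ω) else none) P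

/-- The law of `X` observed on the random interval `[0, T)`. -/
def restLawIco (P : Measure Ω) (X : ℝ≥0 → Ω → Option (Fin d → ℝ)) (T : Ω → ℝ≥0∞) :
    Measure (ℝ≥0 → Option (Option (Fin d → ℝ))) :=
  Measure.map (fun ω t => if (t : ℝ≥0∞) < T ω then some (X t ω) else none) P

/-- The law of the process `X` under `P`. -/
def pkLaw (P : Measure Ω) (X : ℝ≥0 → Ω → Option (Fin d → ℝ)) :
    Measure (ℝ≥0 → Option (Fin d → ℝ)) :=
  Measure.map (fun ω t => X t ω) P

/-- An (unkilled) Lévy process with values in a normed abelian group `V`. -/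
structure IsLevy {V : Type*} [NormedAddCommGroup V] [MeasurableSpace V]
    (P : Measure Ω) (F : Filtration ℝ≥0 mΩ) (X : ℝ≥0 → Ω → V) : Prop where
  adapted : ∀ t, Measurable[F t] (X t)
  rightCont : ∀ ω, ∀ t : ℝ≥0, ContinuousWithinAt (fun s => X s ω) (Set.Ici t) t
  leftLim : ∀ ω, ∀ t : ℝ≥0, 0 < t → ∃ l, Tendsto (fun s => X s ω) (nhdsWithin t (Set.Iio t)) (nhds l)
  init : ∀ᵐ ω ∂P, X 0 ω = 0
  increments : ∀ s t : ℝ≥0, s ≤ t → ∀ g : V → ℝ≥0∞, Measurable g →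
    ∀ A : Set Ω, MeasurableSet[F s] A →
      ∫⁻ ω in A, g (X t ω - X s ω) ∂P = P A * ∫⁻ ω, g (X (t - s) ω) ∂P

section Helpers

lemma measurable_some_opt {α : Type*} [MeasurableSpace α] :
    Measurable (fun a : α => (some a : Option α)) := by
  intro s hs
  obtain ⟨t, ht, rfl⟩ := hs
  show MeasurableSet (Sum.inr ⁻¹' t)
  exact measurable_inr ht

lemma lifetime_killed (X : ℝ≥0 → Ω → Fin d → ℝ) (e : Ω → ℝ≥0) (ω : Ω) :
    lifetime (fun t ω => if t < e ω then some (X t ω) else none) ω = (e ω : ℝ≥0∞) := by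
  unfold lifetime
  apply le_antisymm
  · rcases (zero_le : 0 ≤ e ω).eq_or_lt with h | h
    · have hmem : ∀ ε : ℝ≥0, 0 < ε →
          sInf ((fun s : ℝ≥0 => (s : ℝ≥0∞)) ''
            {s : ℝ≥0 | 0 < s ∧ (if s < e ω then some (X s ω) else none) = none}) ≤ ε := by
        intro ε hε
        refine sInf_le ⟨ε, ⟨hε, ?_⟩, rfl⟩
        simp only [← h, not_lt_zero', if_false]
      rw [← h]
      refine ENNReal.le_of_forall_pos_le_add fun ε hε _ => ?_
      exact le_trans (hmem ε hε) (by simp)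
    · refine sInf_le ⟨e ω, ⟨h, ?_⟩, rfl⟩
      simp only [lt_irrefl, if_false]
  · refine le_sInf ?_
    rintro x ⟨u, ⟨-, hu⟩, rfl⟩
    refine ENNReal.coe_le_coe.2 (not_lt.1 fun hlt => ?_)
    simp only [hlt, if_true] at hu
    exact Option.some_ne_none _ hu

/-- The canonical minimal progressive enlargement of `F` by `e`. -/
def pkFiltration (F : Filtration ℝ≥0 mΩ) (e : Ω → ℝ≥0) (he : Measurable e) :
    Filtration ℝ≥0 mΩ where
  seq t :=
    { MeasurableSet' := fun A => MeasurableSet[mΩ] A ∧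
        ∃ B, MeasurableSet[F t] B ∧ A ∩ {ω | t < e ω} = B ∩ {ω | t < e ω}
      measurableSet_empty := ⟨MeasurableSet.empty, ∅, @MeasurableSet.empty _ (F t), rfl⟩
      measurableSet_compl := by
        rintro A ⟨hA, B, hB, hAB⟩
        refine ⟨hA.compl, Bᶜ, hB.compl, ?_⟩
        ext x
        have hx := Set.ext_iff.1 hAB x
        simp only [mem_inter_iff, mem_compl_iff] at hx ⊢
        tauto
      measurableSet_iUnion := by
        intro f hf
        choose hA B hB hAB using hf
        refine ⟨MeasurableSet.iUnion hA, ⋃ i, B i, MeasurableSet.iUnion hB, ?_⟩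
        simp only [iUnion_inter]
        exact iUnion_congr hAB }
  mono' := by
    intro s t hst A hA
    obtain ⟨hAm, B, hB, hAB⟩ := hA
    refine ⟨hAm, B, F.mono hst _ hB, ?_⟩
    ext x
    have hx := Set.ext_iff.1 hAB x
    simp only [mem_inter_iff, mem_setOf_eq] at hx ⊢
    constructor
    · rintro ⟨hxA, hxt⟩
      exact ⟨(hx.1 ⟨hxA, lt_of_le_of_lt hst hxt⟩).1, hxt⟩
    · rintro ⟨hxB, hxt⟩
      exact ⟨(hx.2 ⟨hxB, lt_of_le_of_lt hst hxt⟩).1, hxt⟩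
  le' := fun _ _ hA => hA.1

lemma setLIntegral_indep {P : Measure Ω} [IsProbabilityMeasure P]
    {m1 m2 : MeasurableSpace Ω} (h1 : m1 ≤ mΩ) (h2 : m2 ≤ mΩ)
    (hindep : ProbabilityTheory.Indep m1 m2 P) {C : Set Ω} (hC : MeasurableSet[m1] C)
    {f : Ω → ℝ≥0∞} (hf : Measurable[m2] f) :
    ∫⁻ ω in C, f ω ∂P = P C * ∫⁻ ω, f ω ∂P := by
  have hmul := lintegral_mul_eq_lintegral_mul_lintegral_of_independent_measurableSpace
    (f := C.indicator fun _ => (1 : ℝ≥0∞)) (g := f) h1 h2 hindep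
    ((measurable_const : Measurable[m1] fun _ : Ω => (1 : ℝ≥0∞)).indicator hC) hf
  have h1' : ∀ ω, C.indicator (fun _ => (1 : ℝ≥0∞)) ω * f ω = C.indicator f ω := by
    intro ω; by_cases h : ω ∈ C <;> simp [h]
  have h2' : ∫⁻ ω, C.indicator (fun _ => (1 : ℝ≥0∞)) ω ∂P = P C := by
    rw [lintegral_indicator (h1 _ hC)]
    simp
  rw [← lintegral_indicator (h1 _ hC) f, ← lintegral_congr h1', hmul, h2']

end Helpers

/-- If `X` is an (unkilled) `ℝ^d`-valued Lévy process in `F` and `e` is an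
exponential time (of some rate `r ∈ (0, ∞)`, i.e. with strictly positive mean) independent of
`F_∞`, then `X` killed at `e` is a possibly killed Lévy process in the progressive enlargement
of `F` by `e` (the smallest enlargement of `F` making `e` a stopping time). -/
theorem killed_levy_in_progressive_enlargement
    {Ω : Type*} {mΩ : MeasurableSpace Ω} {d : ℕ}
    (P : Measure Ω) [IsProbabilityMeasure P] (F : Filtration ℝ≥0 mΩ)
    (X : ℝ≥0 → Ω → (Fin d → ℝ)) (hX : IsLevy P F X)
    (e : Ω → ℝ≥0) (hemeas : Measurable e)
    (hexp : ∃ r : ℝ≥0, 0 < r ∧ ∀ t : ℝ≥0,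
      P {ω | t < e ω} = ENNReal.ofReal (Real.exp (-((r : ℝ) * t))))
    (hindep : ProbabilityTheory.Indep (MeasurableSpace.comap e inferInstance) (⨆ t, F t) P)
    (G : Filtration ℝ≥0 mΩ) (hFG : ∀ t, F t ≤ G t) (hGe : IsStoppingTime G (fun ω => (e ω : WithTop ℝ≥0)))
    (hmin : ∀ G' : Filtration ℝ≥0 mΩ, (∀ t, F t ≤ G' t) → IsStoppingTime G' (fun ω => (e ω : WithTop ℝ≥0)) →
      ∀ t, G t ≤ G' t) :
    IsPKLevy P G (fun t ω => if t < e ω then some (X t ω) else none) := by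
  classical
  obtain ⟨r, hr, hre⟩ := hexp
  have hlt : ∀ ω, lifetime (fun t ω => if t < e ω then some (X t ω) else none) ω
      = (e ω : ℝ≥0∞) := lifetime_killed X e
  have hm2 : (⨆ t, F t) ≤ mΩ := iSup_le fun t => F.le t
  have hm1 : MeasurableSpace.comap e inferInstance ≤ mΩ := hemeas.comap_le
  have hHe : ∀ u : ℝ≥0, MeasurableSet[MeasurableSpace.comap e inferInstance] {ω | u < e ω} :=
    fun u => ⟨Set.Ioi u, measurableSet_Ioi, rfl⟩
  have hHe' : ∀ u : ℝ≥0, MeasurableSet {ω | u < e ω} := fun u => hm1 _ (hHe u)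
  have he0 : ∀ᵐ ω ∂P, 0 < e ω := by
    have h1 : P {ω | (0 : ℝ≥0) < e ω} = 1 := by simpa using hre 0
    rw [ae_iff]
    have heq : {ω | ¬ 0 < e ω} = {ω | (0 : ℝ≥0) < e ω}ᶜ := by ext ω; simp
    rw [heq, prob_compl_eq_zero_iff (hHe' 0)]
    exact h1
  refine ⟨?_, ?_, ?_, ?_, ?_, ?_, ?_⟩
  · -- adapted
    intro t
    have hset : MeasurableSet[G t] {ω | t < e ω} := by
      have h := (hGe t).compl
      simpa only [compl_setOf, not_le, WithTop.coe_lt_coe] using h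
    exact Measurable.ite hset
      (measurable_some_opt.comp ((hX.adapted t).mono (hFG t) le_rfl)) measurable_const
  · -- dead
    intro ω t h
    rw [hlt ω] at h
    rw [if_neg (not_lt.2 (by exact_mod_cast h))]
  · -- rightCont
    intro ω t ht
    rw [hlt ω] at ht
    have ht' : t < e ω := by exact_mod_cast ht
    have hmem : Set.Iio (e ω) ∈ nhdsWithin t (Set.Ici t) :=
      mem_nhdsWithin_of_mem_nhds (Iio_mem_nhds ht')
    have heq : pkPath (fun t ω => if t < e ω then some (X t ω) else none) ω
        =ᶠ[nhdsWithin t (Set.Ici t)] fun s => X s ω :=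
      eventually_of_mem hmem fun s hs => by simp [pkPath, if_pos (mem_Iio.1 hs)]
    exact (hX.rightCont ω t).congr_of_eventuallyEq heq (by simp [pkPath, if_pos ht'])
  · -- leftLim
    intro ω t ht0 ht
    rw [hlt ω] at ht
    have ht' : t ≤ e ω := by exact_mod_cast ht
    obtain ⟨l, hl⟩ := hX.leftLim ω t ht0
    refine ⟨l, hl.congr' ?_⟩
    filter_upwards [self_mem_nhdsWithin] with s hs
    simp [pkPath, if_pos (lt_of_lt_of_le (mem_Iio.1 hs) ht')]
  · -- init
    filter_upwards [hX.init, he0] with ω h1 h2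
    rw [if_pos h2, h1]
  · -- alive
    filter_upwards [he0] with ω h
    rw [hlt ω]
    exact_mod_cast h
  · -- increments
    intro s t hst g hg A hA
    obtain ⟨hAm, B, hB, hAB⟩ := hmin (pkFiltration F e hemeas)
      (fun u A hAu => ⟨F.le u _ hAu, A, hAu, rfl⟩)
      (fun u => ⟨by simp only [WithTop.coe_le_coe]; exact hemeas measurableSet_Iic, ∅, @MeasurableSet.empty _ (F u), by
        ext x
        simp only [mem_inter_iff, mem_setOf_eq, empty_inter, mem_empty_iff_false, iff_false,
          not_and, WithTop.coe_le_coe]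
        exact fun h1 h2 => absurd h2 h1.not_gt⟩) s A hA
    -- measurability of the pieces w.r.t. `⨆ u, F u`
    have hBm2 : MeasurableSet[⨆ u, F u] B := (le_iSup (fun u => (F u : MeasurableSpace Ω)) s) _ hB
    have hXm2 : ∀ u : ℝ≥0, Measurable[⨆ u, F u] (X u) := fun u =>
      (hX.adapted u).mono (le_iSup (fun u => (F u : MeasurableSpace Ω)) u) le_rfl
    have hh : Measurable[⨆ u, F u] fun ω => g (X t ω - X s ω) :=
      hg.comp ((hXm2 t).sub (hXm2 s))
    have hh2 : Measurable[⨆ u, F u] fun ω => g (X (t - s) ω) := hg.comp (hXm2 (t - s))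
    have hBmΩ : MeasurableSet B := F.le s _ hB
    -- rewrite the set in the RHS
    have hsetlt : {ω | (s : ℝ≥0∞) < lifetime (fun t ω => if t < e ω then some (X t ω) else none) ω}
        = {ω | s < e ω} := by
      ext ω
      rw [mem_setOf_eq, hlt ω]
      exact ENNReal.coe_lt_coe
    -- integrand identities
    have hintegrand : ∀ ω, kval g (osub ((fun t ω => if t < e ω then some (X t ω) else none) t ω)
        ((fun t ω => if t < e ω then some (X t ω) else none) s ω))
        = ({ω | t < e ω}).indicator (fun ω => g (X t ω - X s ω)) ω := by
      intro ω
      by_cases h : t < e ω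
      · have hs' : s < e ω := lt_of_le_of_lt hst h
        simp [kval, osub, if_pos h, if_pos hs', indicator, h]
      · by_cases hs' : s < e ω <;> simp [kval, osub, h, hs', indicator]
    have hintegrand2 : ∀ ω, kval g ((fun t ω => if t < e ω then some (X t ω) else none) (t - s) ω)
        = ({ω | t - s < e ω}).indicator (fun ω => g (X (t - s) ω)) ω := by
      intro ω
      by_cases h : t - s < e ω <;> simp [kval, indicator, h]
    -- relate A and B under {t < e}
    have hCACB : {ω | t < e ω} ∩ A = {ω | t < e ω} ∩ B := by
      ext x
      have hx := Set.ext_iff.1 hAB x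
      simp only [mem_inter_iff, mem_setOf_eq] at hx ⊢
      constructor
      · rintro ⟨hxt, hxA⟩
        exact ⟨hxt, (hx.1 ⟨hxA, lt_of_le_of_lt hst hxt⟩).1⟩
      · rintro ⟨hxt, hxB⟩
        exact ⟨hxt, (hx.2 ⟨hxB, lt_of_le_of_lt hst hxt⟩).1⟩
    -- memoryless / multiplicative property of the exponential law
    have hexp_split : P {ω | t < e ω} = P {ω | s < e ω} * P {ω | t - s < e ω} := by
      rw [hre t, hre s, hre (t - s), ← ENNReal.ofReal_mul (Real.exp_nonneg _), ← Real.exp_add]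
      congr 2
      have hts : ((t - s : ℝ≥0) : ℝ) = (t : ℝ) - (s : ℝ) := NNReal.coe_sub hst
      rw [hts]
      ring
    -- LHS computation
    have hLHS : ∫⁻ ω in A, kval g (osub ((fun t ω => if t < e ω then some (X t ω) else none) t ω)
          ((fun t ω => if t < e ω then some (X t ω) else none) s ω)) ∂P
        = P {ω | t < e ω} * (P B * ∫⁻ ω, g (X (t - s) ω) ∂P) := by
      calc ∫⁻ ω in A, kval g (osub ((fun t ω => if t < e ω then some (X t ω) else none) t ω)
            ((fun t ω => if t < e ω then some (X t ω) else none) s ω)) ∂P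
          = ∫⁻ ω in A, ({ω | t < e ω}).indicator (fun ω => g (X t ω - X s ω)) ω ∂P :=
            lintegral_congr hintegrand
        _ = ∫⁻ ω in {ω | t < e ω} ∩ A, g (X t ω - X s ω) ∂P := by
            rw [lintegral_indicator (hHe' t), Measure.restrict_restrict (hHe' t)]
        _ = ∫⁻ ω in {ω | t < e ω} ∩ B, g (X t ω - X s ω) ∂P := by rw [hCACB]
        _ = ∫⁻ ω in {ω | t < e ω}, B.indicator (fun ω => g (X t ω - X s ω)) ω ∂P := by
            rw [lintegral_indicator hBmΩ, Measure.restrict_restrict hBmΩ, inter_comm]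
        _ = P {ω | t < e ω} * ∫⁻ ω, B.indicator (fun ω => g (X t ω - X s ω)) ω ∂P :=
            setLIntegral_indep hm1 hm2 hindep (hHe t) (hh.indicator hBm2)
        _ = P {ω | t < e ω} * ∫⁻ ω in B, g (X t ω - X s ω) ∂P := by
            rw [lintegral_indicator hBmΩ]
        _ = P {ω | t < e ω} * (P B * ∫⁻ ω, g (X (t - s) ω) ∂P) := by
            rw [hX.increments s t hst g hg B hB]
    -- RHS computation
    have hPB : P (B ∩ {ω | s < e ω}) = P {ω | s < e ω} * P B := by
      rw [inter_comm]
      exact (hindep.indepSet_of_measurableSet (hHe s) hBm2).measure_inter_eq_mul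
    have hRHS2 : ∫⁻ ω, kval g ((fun t ω => if t < e ω then some (X t ω) else none) (t - s) ω) ∂P
        = P {ω | t - s < e ω} * ∫⁻ ω, g (X (t - s) ω) ∂P := by
      calc ∫⁻ ω, kval g ((fun t ω => if t < e ω then some (X t ω) else none) (t - s) ω) ∂P
          = ∫⁻ ω, ({ω | t - s < e ω}).indicator (fun ω => g (X (t - s) ω)) ω ∂P :=
            lintegral_congr hintegrand2
        _ = ∫⁻ ω in {ω | t - s < e ω}, g (X (t - s) ω) ∂P := lintegral_indicator (hHe' (t - s)) _
        _ = P {ω | t - s < e ω} * ∫⁻ ω, g (X (t - s) ω) ∂P :=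
            setLIntegral_indep hm1 hm2 hindep (hHe (t - s)) hh2
    rw [hLHS, hsetlt, hAB, hPB, hRHS2, hexp_split]
    ring

end
end

section
/- Let N be a homogeneous Poisson process with strictly positive rate, S its first jump time, and let 0 denote the zero process on the same probability space. Then a.s. S/2 > 0 and N agrees with the zero process on [0, S/2], yet N and the zero process do not have the same law. (Thus the stopping time hypothesis in part (i) of the main theorem is essential, since S/2 is not a stopping time.) -/
open MeasureTheory ProbabilityTheory Filter Set
open scoped NNReal ENNReal

noncomputable section

variable {Ω : Type*} {mΩ : MeasurableSpace Ω} {d : ℕ}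

/-- A homogeneous Poisson process of rate `r`: an `ℕ`-valued process starting at `0` with
nondecreasing, right-constant (càdlàg) paths, stationary Poisson-distributed increments, and
independent increments. -/
def IsPoissonProcess {Ω : Type*} {mΩ : MeasurableSpace Ω} (P : Measure Ω)
    (N : ℝ≥0 → Ω → ℕ) (r : ℝ≥0) : Prop :=
  (∀ ω, Monotone fun t => N t ω) ∧
  (∀ ω (t : ℝ≥0), ∃ ε : ℝ≥0, 0 < ε ∧ ∀ s, t ≤ s → s < t + ε → N s ω = N t ω) ∧
  (∀ᵐ ω ∂P, N 0 ω = 0) ∧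
  (∀ t, Measurable (N t)) ∧
  (∀ s t : ℝ≥0, s ≤ t →
    Measure.map (fun ω => N t ω - N s ω) P = (ProbabilityTheory.poissonPMF (r * (t - s))).toMeasure) ∧
  (∀ (n : ℕ) (t : Fin (n + 1) → ℝ≥0), Monotone t →
    iIndepFun
      (fun (i : Fin n) ω => N (t i.succ) ω - N (t i.castSucc) ω) P)

/-- For a Poisson process `N` with rate `λ > 0` and first jump time `S`,
a.s. `S/2 > 0` and `N` agrees with the zero process on `[0, S/2]`, yet `N` and the zero
process do not have the same law (the random time `S/2` is not a stopping time). -/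
theorem poisson_agrees_with_zero_before_half_first_jump
    {Ω : Type*} {mΩ : MeasurableSpace Ω}
    (P : Measure Ω) [IsProbabilityMeasure P]
    (N : ℝ≥0 → Ω → ℕ) (r : ℝ≥0) (hr : 0 < r) (hN : IsPoissonProcess P N r)
    (S : Ω → ℝ≥0∞)
    (hS : S = fun ω => sInf {t : ℝ≥0∞ | t ≠ ⊤ ∧ 1 ≤ N t.toNNReal ω}) :
    (∀ᵐ ω ∂P, 0 < S ω / 2 ∧ ∀ t : ℝ≥0, (t : ℝ≥0∞) ≤ S ω / 2 → N t ω = 0) ∧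
    Measure.map (fun ω (t : ℝ≥0) => N t ω) P
      ≠ Measure.map (fun (_ : Ω) (_ : ℝ≥0) => (0 : ℕ)) P := by
  obtain ⟨hmono, hrc, h0, hmeas, hincr, _⟩ := hN
  constructor
  · filter_upwards [h0] with ω h0ω
    obtain ⟨ε, hε, hconst⟩ := hrc ω 0
    have hεS : (ε : ℝ≥0∞) ≤ S ω := by
      rw [hS]
      refine le_sInf fun t ht => ?_
      by_contra hlt
      push_neg at hlt
      obtain ⟨ht1, ht2⟩ := ht
      have htε : t.toNNReal < ε := by
        have := ENNReal.toNNReal_lt_toNNReal ht1 ENNReal.coe_ne_top |>.mpr hlt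
        simpa using this
      have : N t.toNNReal ω = N 0 ω := hconst t.toNNReal zero_le (by simpa using htε)
      rw [this, h0ω] at ht2
      exact absurd ht2 (by norm_num)
    have hS0 : S ω ≠ 0 := fun h => by
      rw [h] at hεS
      exact absurd (le_antisymm hεS zero_le) (by exact_mod_cast hε.ne')
    refine ⟨ENNReal.div_pos hS0 (by norm_num), fun t ht => ?_⟩
    have htS : (t : ℝ≥0∞) < S ω := by
      rcases eq_or_ne (S ω) ⊤ with hT | hT
      · rw [hT]; exact ENNReal.coe_lt_top
      · exact lt_of_le_of_lt ht (ENNReal.half_lt_self hS0 hT)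
    by_contra hne
    have h1 : 1 ≤ N t ω := Nat.one_le_iff_ne_zero.mpr hne
    have : S ω ≤ (t : ℝ≥0∞) := by
      rw [hS]
      exact sInf_le ⟨ENNReal.coe_ne_top, by simpa using h1⟩
    exact absurd htS (not_lt.mpr this)
  · intro hEq
    have hmN : Measurable (fun ω (t : ℝ≥0) => N t ω) :=
      measurable_pi_lambda _ hmeas
    have hA : MeasurableSet {f : ℝ≥0 → ℕ | f 1 = 0} :=
      (measurable_pi_apply (1 : ℝ≥0)) (measurableSet_singleton 0)
    have e1 : Measure.map (fun ω (t : ℝ≥0) => N t ω) P {f | f 1 = 0}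
        = P {ω | N 1 ω = 0} := by
      rw [Measure.map_apply hmN hA]; rfl
    have e2 : Measure.map (fun (_ : Ω) (_ : ℝ≥0) => (0 : ℕ)) P {f | f 1 = 0} = 1 := by
      rw [Measure.map_apply measurable_const hA]
      simp
    have hm : Measurable (fun ω => N 1 ω - N 0 ω) := (hmeas 1).sub (hmeas 0)
    have key : P {ω | N 1 ω = 0}
        = (ProbabilityTheory.poissonPMF (r * ((1 : ℝ≥0) - 0))).toMeasure {0} := by
      have hcong : P {ω | N 1 ω = 0} = P {ω | N 1 ω - N 0 ω = 0} := by
        refine measure_congr ?_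
        filter_upwards [h0] with ω h0ω
        show (N 1 ω = 0) = (N 1 ω - N 0 ω = 0)
        rw [h0ω, Nat.sub_zero]
      rw [hcong, ← hincr 0 1 zero_le_one,
        Measure.map_apply hm (measurableSet_singleton 0)]
      rfl
    have hval : (ProbabilityTheory.poissonPMF (r * ((1 : ℝ≥0) - 0))).toMeasure {0}
        = ENNReal.ofReal (Real.exp (-(r : ℝ))) := by
      rw [PMF.toMeasure_apply_singleton _ 0 (measurableSet_singleton 0)]
      show ENNReal.ofReal (ProbabilityTheory.poissonPMFReal (r * ((1 : ℝ≥0) - 0)) 0) = _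
      simp [ProbabilityTheory.poissonPMFReal]
    have hlt : ENNReal.ofReal (Real.exp (-(r : ℝ))) < 1 := by
      rw [← ENNReal.ofReal_one]
      exact ENNReal.ofReal_lt_ofReal_iff_of_nonneg (Real.exp_nonneg _) |>.mpr
        (Real.exp_lt_one_iff.mpr (by exact_mod_cast neg_neg_iff_pos.mpr hr))
    rw [hEq, e2] at e1
    rw [key, hval] at e1
    exact absurd e1.symm hlt.ne


end
end

section
/- Let X be a killed Lévy process (lifetime ζ < ∞ a.s.) in a filtration F under P, and let S be an F-stopping time with P(S > 0) > 0. Then P(S ≥ ζ) > 0. -/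
open MeasureTheory ProbabilityTheory Filter Set
open scoped NNReal ENNReal

noncomputable section

variable {Ω : Type*} {mΩ : MeasurableSpace Ω} {d : ℕ}

section Aux
variable {P : Measure Ω} {F : Filtration ℝ≥0 mΩ} {X : ℝ≥0 → Ω → Option (Fin d → ℝ)}

lemma measurableSet_ne_none {α : Type*} [MeasurableSpace α] :
    MeasurableSet {o : Option α | o ≠ none} := by
  refine MeasurableSpace.measurableSet_comap.mpr ⟨(Set.range Sum.inl)ᶜ,
    measurableSet_range_inl.compl, ?_⟩
  ext o; cases o <;> simp

lemma ne_none_iff_lt_lifetime (hX : IsPKLevy P F X) {t : ℝ≥0} (ht : 0 < t) (ω : Ω) :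
    X t ω ≠ none ↔ (t : ℝ≥0∞) < lifetime X ω := by
  constructor
  · intro h
    by_contra h'
    exact h (hX.dead ω t (not_lt.mp h'))
  · intro h h'
    exact absurd h (not_lt.mpr (sInf_le ⟨t, ⟨ht, h'⟩, rfl⟩))

lemma set_lt_lifetime_eq (hX : IsPKLevy P F X) {t : ℝ≥0} (ht : 0 < t) :
    {ω | (t : ℝ≥0∞) < lifetime X ω} = X t ⁻¹' {o | o ≠ none} := by
  ext ω; simp only [Set.mem_setOf_eq, Set.mem_preimage]
  exact (ne_none_iff_lt_lifetime hX ht ω).symm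

lemma measurable_X (hX : IsPKLevy P F X) (t : ℝ≥0) : Measurable (X t) :=
  (hX.adapted t).mono (F.le t) le_rfl

lemma measurableSet_lt_lifetime (hX : IsPKLevy P F X) {t : ℝ≥0} (ht : 0 < t) :
    MeasurableSet {ω | (t : ℝ≥0∞) < lifetime X ω} := by
  rw [set_lt_lifetime_eq hX ht]
  exact measurable_X hX t measurableSet_ne_none

lemma measurableSet_X_ne_none (hX : IsPKLevy P F X) (t : ℝ≥0) :
    MeasurableSet {ω | X t ω ≠ none} :=
  measurable_X hX t measurableSet_ne_none

end Aux
section Aux2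
variable {P : Measure Ω} {F : Filtration ℝ≥0 mΩ} {X : ℝ≥0 → Ω → Option (Fin d → ℝ)}

lemma kval_one_eq (y : Option (Fin d → ℝ)) :
    kval (fun _ => (1:ℝ≥0∞)) y = {o : Option (Fin d → ℝ) | o ≠ none}.indicator (fun _ => (1:ℝ≥0∞)) y := by
  cases y <;> simp [kval]

lemma lintegral_kval_one [IsProbabilityMeasure P] (hX : IsPKLevy P F X) (t : ℝ≥0) :
    ∫⁻ ω, kval (fun _ => (1:ℝ≥0∞)) (X t ω) ∂P = P {ω | X t ω ≠ none} := by
  have : ∀ ω, kval (fun _ => (1:ℝ≥0∞)) (X t ω)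
      = {ω' | X t ω' ≠ none}.indicator (fun _ => (1:ℝ≥0∞)) ω := by
    intro ω
    rcases h : X t ω with _ | a <;> simp [kval, Set.indicator, h]
  rw [lintegral_congr this]
  have := lintegral_indicator_one (μ := P) (measurableSet_X_ne_none hX t)
  simpa [Pi.one_def] using this

lemma key_step [IsProbabilityMeasure P] (hX : IsPKLevy P F X) (s h : ℝ≥0) (hh : 0 < h)
    (A : Set Ω) (hA : MeasurableSet[F s] A) :
    P (A ∩ {ω | ((s + h : ℝ≥0) : ℝ≥0∞) < lifetime X ω})
      = P (A ∩ {ω | (s : ℝ≥0∞) < lifetime X ω}) * P {ω | X h ω ≠ none} := by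
  have hinc := hX.increments s (s + h) le_self_add (fun _ => 1) measurable_const A hA
  have hsub : s + h - s = h := by simp
  rw [hsub, lintegral_kval_one hX h] at hinc
  have hsh : (0:ℝ≥0) < s + h := lt_of_lt_of_le hh le_add_self
  -- a.e. fact about X s being none
  have hXs : ∀ᵐ ω ∂P, X s ω = none → lifetime X ω ≤ (s : ℝ≥0∞) := by
    rcases (zero_le : (0:ℝ≥0) ≤ s).eq_or_lt with hs | hs
    · filter_upwards [hX.init] with ω h0 hnone
      rw [← hs] at hnone
      rw [h0] at hnone
      exact absurd hnone (by simp)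
    · exact Filter.Eventually.of_forall fun ω hnone => sInf_le ⟨s, ⟨hs, hnone⟩, rfl⟩
  have hint : ∀ᵐ ω ∂P, kval (fun _ => (1:ℝ≥0∞)) (osub (X (s + h) ω) (X s ω))
      = {ω' | X (s + h) ω' ≠ none}.indicator (fun _ => (1:ℝ≥0∞)) ω := by
    filter_upwards [hXs] with ω hω
    rcases h1 : X (s + h) ω with _ | a
    · simp [osub, kval, Set.indicator, h1]
    · have hlt : ((s + h : ℝ≥0) : ℝ≥0∞) < lifetime X ω :=
        (ne_none_iff_lt_lifetime hX hsh ω).mp (by rw [h1]; simp)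
      have hXsome : X s ω ≠ none := by
        intro hn
        have h2 : ((s + h : ℝ≥0) : ℝ≥0∞) < (s : ℝ≥0∞) := lt_of_lt_of_le hlt (hω hn)
        rw [ENNReal.coe_lt_coe] at h2
        exact absurd h2 (not_lt.mpr le_self_add)
      rcases h2 : X s ω with _ | b
      · exact absurd h2 hXsome
      · simp [osub, kval, Set.indicator, h1, h2]
  have hL : ∫⁻ ω in A, kval (fun _ => (1:ℝ≥0∞)) (osub (X (s + h) ω) (X s ω)) ∂P
      = P (A ∩ {ω | ((s + h : ℝ≥0) : ℝ≥0∞) < lifetime X ω}) := by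
    rw [lintegral_congr_ae (ae_restrict_of_ae hint)]
    have := lintegral_indicator_one (μ := P.restrict A) (measurableSet_X_ne_none hX (s + h))
    rw [show ({ω' | X (s+h) ω' ≠ none}.indicator (fun _ => (1:ℝ≥0∞)))
        = ({ω' | X (s+h) ω' ≠ none}.indicator (1 : Ω → ℝ≥0∞)) from rfl, this,
      Measure.restrict_apply (measurableSet_X_ne_none hX (s + h))]
    congr 1
    rw [Set.inter_comm, set_lt_lifetime_eq hX hsh]
    rfl
  rw [hL] at hinc
  exact hinc

lemma prob_pos_lifetime [IsProbabilityMeasure P] (hX : IsPKLevy P F X) :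
    P {ω | (0 : ℝ≥0∞) < lifetime X ω} = 1 := by
  have h0 : P {ω | ¬ (0 : ℝ≥0∞) < lifetime X ω} = 0 := ae_iff.mp hX.alive
  refine le_antisymm prob_le_one ?_
  calc (1:ℝ≥0∞) = P Set.univ := (measure_univ).symm
    _ ≤ P ({ω | (0:ℝ≥0∞) < lifetime X ω} ∪ {ω | ¬ (0:ℝ≥0∞) < lifetime X ω}) := by
        refine measure_mono fun ω _ => ?_
        by_cases hω : (0:ℝ≥0∞) < lifetime X ω
        · exact Or.inl hω
        · exact Or.inr hω
    _ ≤ P {ω | (0:ℝ≥0∞) < lifetime X ω} + P {ω | ¬ (0:ℝ≥0∞) < lifetime X ω} :=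
        measure_union_le _ _
    _ = P {ω | (0:ℝ≥0∞) < lifetime X ω} := by rw [h0, add_zero]

lemma pow_step [IsProbabilityMeasure P] (hX : IsPKLevy P F X) (h : ℝ≥0) (hh : 0 < h) (n : ℕ) :
    P {ω | (((n : ℝ≥0) * h : ℝ≥0) : ℝ≥0∞) < lifetime X ω} = (P {ω | X h ω ≠ none}) ^ n := by
  induction n with
  | zero => simpa using prob_pos_lifetime hX
  | succ n ih =>
    have hcast : ((n+1 : ℕ) : ℝ≥0) * h = (n : ℝ≥0) * h + h := by push_cast; ring
    have := key_step hX ((n : ℝ≥0) * h) h hh Set.univ MeasurableSet.univ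
    rw [Set.univ_inter, Set.univ_inter] at this
    rw [hcast, this, ih, pow_succ]
end Aux2
section Aux3
variable {P : Measure Ω} {F : Filtration ℝ≥0 mΩ} {X : ℝ≥0 → Ω → Option (Fin d → ℝ)}

lemma one_sub_pow_le (x : ℝ≥0∞) (hx : x ≤ 1) (n : ℕ) : 1 - x ^ n ≤ n * (1 - x) := by
  induction n with
  | zero => simp
  | succ n ih =>
    have hpow : x ^ (n+1) ≤ x ^ n := pow_le_pow_of_le_one zero_le hx (by omega)
    have hpn : x ^ n ≤ 1 := pow_le_one₀ zero_le hx
    have hsplit : (1:ℝ≥0∞) - x ^ (n+1) = (1 - x ^ n) + (x ^ n - x ^ (n+1)) := by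
      rw [tsub_add_tsub_cancel hpn hpow]
    have hlast : x ^ n - x ^ (n+1) ≤ 1 - x := by
      rw [tsub_le_iff_right]
      calc x ^ n = x ^ n * (x + (1 - x)) := by rw [add_tsub_cancel_of_le hx, mul_one]
        _ = x ^ (n+1) + x ^ n * (1 - x) := by ring
        _ ≤ x ^ (n+1) + 1 * (1 - x) := by
            gcongr
        _ = (1 - x) + x ^ (n+1) := by rw [one_mul, add_comm]
    calc (1:ℝ≥0∞) - x ^ (n+1) = (1 - x ^ n) + (x ^ n - x ^ (n+1)) := hsplit
      _ ≤ n * (1 - x) + (1 - x) := add_le_add ih hlast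
      _ = ((n + 1 : ℕ) : ℝ≥0∞) * (1 - x) := by push_cast; ring
    
lemma prob_alive_lt_one [IsProbabilityMeasure P] (hX : IsPKLevy P F X)
    (hkilled : ∀ᵐ ω ∂P, lifetime X ω < ⊤) {ε : ℝ≥0} (hε : 0 < ε) :
    P {ω | X ε ω ≠ none} < 1 := by
  -- first: some time with survival probability < 1
  have hex : ∃ m : ℕ, P {ω | X ((m : ℝ≥0) + 1) ω ≠ none} < 1 := by
    by_contra hno
    push_neg at hno
    have hall : ∀ m : ℕ, P {ω | X ((m : ℝ≥0) + 1) ω ≠ none} = 1 :=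
      fun m => le_antisymm prob_le_one (hno m)
    set C := ⋂ m : ℕ, {ω | X ((m : ℝ≥0) + 1) ω ≠ none} with hC
    have hCc : P Cᶜ = 0 := by
      rw [hC, Set.compl_iInter]
      refine measure_iUnion_null fun m => ?_
      rw [measure_compl (measurableSet_X_ne_none hX _) (measure_ne_top _ _), hall m]
      simp
    have hCsub : C ⊆ {ω | ¬ lifetime X ω < ⊤} := by
      intro ω hω
      simp only [Set.mem_setOf_eq, not_lt, top_le_iff]
      by_contra hne
      obtain ⟨n, hn⟩ := ENNReal.exists_nat_gt hne
      have h1 : (((n : ℝ≥0) + 1 : ℝ≥0) : ℝ≥0∞) < lifetime X ω :=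
        (ne_none_iff_lt_lifetime hX (by positivity) ω).mp (Set.mem_iInter.mp hω n)
      have h2 : ((n : ℝ≥0∞)) ≤ (((n : ℝ≥0) + 1 : ℝ≥0) : ℝ≥0∞) := by
        push_cast; exact le_self_add
      exact absurd (lt_trans hn (lt_of_le_of_lt h2 h1)) (lt_irrefl _)
    have hC0 : P C = 0 := le_antisymm (le_trans (measure_mono hCsub)
      (le_of_eq (ae_iff.mp hkilled))) zero_le
    have : (1:ℝ≥0∞) ≤ 0 := by
      calc (1:ℝ≥0∞) = P Set.univ := (measure_univ).symm
        _ ≤ P C + P Cᶜ := by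
            refine le_trans (measure_mono ?_) (measure_union_le _ _)
            intro ω _
            by_cases hω : ω ∈ C
            · exact Or.inl hω
            · exact Or.inr hω
        _ = 0 := by rw [hC0, hCc, add_zero]
    simp at this
  obtain ⟨m, hm⟩ := hex
  obtain ⟨M, hM⟩ := exists_nat_ge (((m : ℝ≥0) + 1) / ε)
  have hMε : (m : ℝ≥0) + 1 ≤ (M : ℝ≥0) * ε := by
    rwa [div_le_iff₀ hε] at hM
  have hpow : (P {ω | X ε ω ≠ none}) ^ M < 1 := by
    rw [← pow_step hX ε hε M]
    calc P {ω | (((M : ℝ≥0) * ε : ℝ≥0) : ℝ≥0∞) < lifetime X ω}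
        ≤ P {ω | (((m : ℝ≥0) + 1 : ℝ≥0) : ℝ≥0∞) < lifetime X ω} := by
          refine measure_mono fun ω hω => ?_
          simp only [Set.mem_setOf_eq] at hω ⊢
          exact lt_of_le_of_lt (ENNReal.coe_le_coe.mpr hMε) hω
      _ = P {ω | X ((m : ℝ≥0) + 1) ω ≠ none} := by
          rw [set_lt_lifetime_eq hX (by positivity)]; rfl
      _ < 1 := hm
  by_contra hge
  have heq : P {ω | X ε ω ≠ none} = 1 := le_antisymm prob_le_one (not_lt.mp hge)
  rw [heq, one_pow] at hpow
  exact absurd hpow (lt_irrefl _)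

lemma measurable_lifetime (hX : IsPKLevy P F X) : Measurable (lifetime X) := by
  apply measurable_of_Ioi
  intro a
  rcases eq_or_ne a ⊤ with rfl | ha
  · have : lifetime X ⁻¹' (Set.Ioi ⊤) = ∅ := by
      ext ω; simp [not_top_lt]
    rw [this]; exact MeasurableSet.empty
  · have hpre : lifetime X ⁻¹' (Set.Ioi a) = {ω | a < lifetime X ω} := rfl
    rw [hpre, ← ENNReal.coe_toNNReal ha]
    rcases (zero_le : (0:ℝ≥0) ≤ a.toNNReal).eq_or_lt with h0 | h0
    · -- a = 0 : write as countable union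
      have : {ω | ((a.toNNReal : ℝ≥0) : ℝ≥0∞) < lifetime X ω}
          = ⋃ n : ℕ, {ω | ((((n : ℝ≥0) + 1)⁻¹ : ℝ≥0) : ℝ≥0∞) < lifetime X ω} := by
        ext ω
        simp only [Set.mem_setOf_eq, Set.mem_iUnion, ← h0, ENNReal.coe_zero]
        constructor
        · intro hω
          rcases eq_or_ne (lifetime X ω) ⊤ with htop | htop
          · exact ⟨0, by rw [htop]; exact ENNReal.coe_lt_top⟩
          · set z := (lifetime X ω).toNNReal with hz
            have hzpos : 0 < z := by
              rw [hz]
              exact ENNReal.toNNReal_pos (ne_of_gt hω) htop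
            obtain ⟨n, hn⟩ := exists_nat_gt (z⁻¹)
            refine ⟨n, ?_⟩
            have h1 : ((n : ℝ≥0) + 1)⁻¹ < z := by
              have h2 : z⁻¹ < (n : ℝ≥0) + 1 := lt_of_lt_of_le hn le_self_add
              have h3 : ((n:ℝ≥0)+1)⁻¹ < (z⁻¹)⁻¹ := NNReal.inv_lt_inv (inv_ne_zero hzpos.ne') h2
              rwa [inv_inv] at h3
            calc ((((n : ℝ≥0) + 1)⁻¹ : ℝ≥0) : ℝ≥0∞) < (z : ℝ≥0∞) := ENNReal.coe_lt_coe.mpr h1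
              _ = lifetime X ω := ENNReal.coe_toNNReal htop
        · intro ⟨n, hn⟩
          exact lt_of_le_of_lt zero_le hn
      rw [this]
      exact MeasurableSet.iUnion fun n => measurableSet_lt_lifetime hX (by positivity)
    · exact measurableSet_lt_lifetime hX h0

lemma measurable_stopping {S : Ω → ℝ≥0∞} (hS : IsStoppingTimeE F S) : Measurable S := by
  apply measurable_of_Iic
  intro a
  rcases eq_or_ne a ⊤ with rfl | ha
  · simp
  · have : S ⁻¹' (Set.Iic a) = {ω | S ω ≤ ((a.toNNReal : ℝ≥0) : ℝ≥0∞)} := by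
      rw [ENNReal.coe_toNNReal ha]; rfl
    rw [this]
    exact (F.le _) _ (hS a.toNNReal)
end Aux3
/-- If `X` is a killed Lévy process (lifetime `ζ < ∞` a.s.) and `S` is an
`F`-stopping time with `P(S > 0) > 0`, then `P(S ≥ ζ) > 0`. -/
theorem stopping_time_sees_death
    {Ω : Type*} {mΩ : MeasurableSpace Ω} {d : ℕ}
    (P : Measure Ω) [IsProbabilityMeasure P] (F : Filtration ℝ≥0 mΩ)
    (X : ℝ≥0 → Ω → Option (Fin d → ℝ)) (hX : IsPKLevy P F X)
    (hkilled : ∀ᵐ ω ∂P, lifetime X ω < ⊤)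
    (S : Ω → ℝ≥0∞) (hS : IsStoppingTimeE F S)
    (hpos : 0 < P {ω | 0 < S ω}) :
    0 < P {ω | lifetime X ω ≤ S ω} := by
  by_contra hcon
  push_neg at hcon
  have hnull : P {ω | lifetime X ω ≤ S ω} = 0 := le_antisymm hcon zero_le
  -- find ε > 0 with P(S ≥ ε) > 0
  obtain ⟨ε, hε, hp⟩ : ∃ ε : ℝ≥0, 0 < ε ∧ 0 < P {ω | (ε : ℝ≥0∞) ≤ S ω} := by
    by_contra hno
    push_neg at hno
    have hz : ∀ n : ℕ, P {ω | ((((n : ℝ≥0) + 1)⁻¹ : ℝ≥0) : ℝ≥0∞) ≤ S ω} = 0 := fun n =>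
      le_antisymm (hno _ (by positivity)) zero_le
    have hsub : {ω | 0 < S ω} ⊆ ⋃ n : ℕ, {ω | ((((n : ℝ≥0) + 1)⁻¹ : ℝ≥0) : ℝ≥0∞) ≤ S ω} := by
      intro ω hω
      simp only [Set.mem_setOf_eq, Set.mem_iUnion]
      simp only [Set.mem_setOf_eq] at hω
      rcases eq_or_ne (S ω) ⊤ with htop | htop
      · exact ⟨0, by rw [htop]; exact le_top⟩
      · set z := (S ω).toNNReal with hzdef
        have hzpos : 0 < z := ENNReal.toNNReal_pos (ne_of_gt hω) htop
        obtain ⟨n, hn⟩ := exists_nat_gt (z⁻¹)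
        have h2 : z⁻¹ < (n : ℝ≥0) + 1 := lt_of_lt_of_le hn le_self_add
        have h3 : ((n : ℝ≥0) + 1)⁻¹ < z := by
          have := NNReal.inv_lt_inv (inv_ne_zero hzpos.ne') h2
          rwa [inv_inv] at this
        refine ⟨n, le_of_lt ?_⟩
        calc (((((n : ℝ≥0) + 1)⁻¹ : ℝ≥0)) : ℝ≥0∞) < (z : ℝ≥0∞) := ENNReal.coe_lt_coe.mpr h3
          _ = S ω := ENNReal.coe_toNNReal htop
    have : P {ω | 0 < S ω} = 0 :=
      le_antisymm (le_trans (measure_mono hsub) (le_of_eq (measure_iUnion_null hz))) zero_le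
    exact absurd this hpos.ne'
  have hf1 : P {ω | X ε ω ≠ none} < 1 := prob_alive_lt_one hX hkilled hε
  -- main per-n inequality
  have main : ∀ n : ℕ, P {ω | (ε : ℝ≥0∞) ≤ S ω} * (1 - P {ω | X ε ω ≠ none})
      ≤ P {ω | S ω < lifetime X ω ∧
          lifetime X ω < S ω + ((ε / ((n : ℝ≥0) + 1) : ℝ≥0) : ℝ≥0∞)} := by
    intro n
    set h : ℝ≥0 := ε / ((n : ℝ≥0) + 1) with hhdef
    have hhpos : 0 < h := by positivity
    have hnh : ((n : ℝ≥0) + 1) * h = ε := by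
      rw [hhdef, mul_comm, div_mul_cancel₀ _ (by positivity : ((n : ℝ≥0) + 1) ≠ 0)]
    set A : ℕ → Set Ω := fun k => {ω | (((k : ℝ≥0) * h : ℝ≥0) : ℝ≥0∞) < S ω} with hA
    set Z : ℕ → Set Ω := fun k => {ω | (((k : ℝ≥0) * h : ℝ≥0) : ℝ≥0∞) < lifetime X ω} with hZ
    set D : ℕ → Set Ω := fun k => A k \ A (k + 1) with hD
    have hAmeasF : ∀ k : ℕ, MeasurableSet[F ((k : ℝ≥0) * h)] (A k) := by
      intro k
      have : A k = {ω | S ω ≤ (((k : ℝ≥0) * h : ℝ≥0) : ℝ≥0∞)}ᶜ := by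
        ext ω; simp [hA, not_le]
      rw [this]
      exact (hS _).compl
    have hAmeas : ∀ k : ℕ, MeasurableSet (A k) := fun k => (F.le _) _ (hAmeasF k)
    have hZmeas : ∀ k : ℕ, MeasurableSet (Z k) :=
      fun k => (measurable_lifetime hX) measurableSet_Ioi
    have hcast : ∀ k : ℕ, ((k + 1 : ℕ) : ℝ≥0) * h = (k : ℝ≥0) * h + h := by
      intro k; push_cast; ring
    -- key equation
    have hkey : ∀ k : ℕ, P (A k ∩ Z (k + 1)) = P (A k ∩ Z k) * P {ω | X h ω ≠ none} := by
      intro k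
      have hk := key_step hX ((k : ℝ≥0) * h) h hhpos (A k) (hAmeasF k)
      have : Z (k + 1) = {ω | (((k : ℝ≥0) * h + h : ℝ≥0) : ℝ≥0∞) < lifetime X ω} := by
        simp only [hZ]; rw [← hcast k]
      rw [this]
      exact hk
    -- null replacement
    have hrep : ∀ k : ℕ, P (A k ∩ Z k) = P (A k) := by
      intro k
      refine le_antisymm (measure_mono Set.inter_subset_left) ?_
      have hsplit : A k ⊆ (A k ∩ Z k) ∪ {ω | lifetime X ω ≤ S ω} := by
        intro ω hω
        by_cases hz : ω ∈ Z k
        · exact Or.inl ⟨hω, hz⟩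
        · refine Or.inr ?_
          simp only [hZ, Set.mem_setOf_eq, not_lt] at hz
          simp only [hA, Set.mem_setOf_eq] at hω
          exact le_trans hz hω.le
      calc P (A k) ≤ P (A k ∩ Z k) + P {ω | lifetime X ω ≤ S ω} :=
            le_trans (measure_mono hsplit) (measure_union_le _ _)
        _ = P (A k ∩ Z k) := by rw [hnull, add_zero]
    have hsubA : ∀ k : ℕ, A (k + 1) ⊆ A k := by
      intro k ω hω
      simp only [hA, Set.mem_setOf_eq] at hω ⊢
      refine lt_of_le_of_lt (ENNReal.coe_le_coe.mpr ?_) hω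
      rw [hcast k]
      exact le_self_add
    -- per-k identity : P (D k \ Z (k+1)) = P (A k) * (1 - f h)
    have hfh_le : P {ω | X h ω ≠ none} ≤ 1 := prob_le_one
    have eqk : ∀ k : ℕ, P (D k \ Z (k + 1)) = P (A k) * (1 - P {ω | X h ω ≠ none}) := by
      intro k
      have e1 : P (A (k + 1)) + P (D k ∩ Z (k + 1)) = P (A k) * P {ω | X h ω ≠ none} := by
        have hi := measure_inter_add_diff (μ := P) (A k ∩ Z (k + 1)) (hAmeas (k + 1))
        have h1 : (A k ∩ Z (k + 1)) ∩ A (k + 1) = A (k + 1) ∩ Z (k + 1) := by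
          ext ω
          constructor
          · rintro ⟨⟨_, hz⟩, ha⟩; exact ⟨ha, hz⟩
          · rintro ⟨ha, hz⟩; exact ⟨⟨hsubA k ha, hz⟩, ha⟩
        have h2 : (A k ∩ Z (k + 1)) \ A (k + 1) = D k ∩ Z (k + 1) := by
          ext ω
          simp only [hD, Set.mem_diff, Set.mem_inter_iff]
          tauto
        rw [h1, h2, hrep (k + 1)] at hi
        rw [hi, hkey k, hrep k]
      have e2 : P (A (k + 1)) + P (D k) = P (A k) := by
        have hi := measure_inter_add_diff (μ := P) (A k) (hAmeas (k + 1))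
        rwa [Set.inter_eq_right.mpr (hsubA k)] at hi
      have e3 : P (D k ∩ Z (k + 1)) + P (D k \ Z (k + 1)) = P (D k) :=
        measure_inter_add_diff (μ := P) (D k) (hZmeas (k + 1))
      have e4 : P (A k) = P (A k) * P {ω | X h ω ≠ none}
          + P (A k) * (1 - P {ω | X h ω ≠ none}) := by
        rw [← mul_add, add_tsub_cancel_of_le hfh_le, mul_one]
      have e5 : P (A k) * P {ω | X h ω ≠ none} + P (D k \ Z (k + 1)) = P (A k) := by
        rw [← e1, ← e2, ← e3]; ring
      have e6 := e5.trans e4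
      have hne : P (A k) * P {ω | X h ω ≠ none} ≠ ⊤ :=
        ENNReal.mul_ne_top (measure_ne_top _ _) (measure_ne_top _ _)
      exact (ENNReal.add_right_inj hne).mp e6
    -- lower bound p ≤ P (A k) for k ≤ n
    have hple : ∀ k : ℕ, k ≤ n → P {ω | (ε : ℝ≥0∞) ≤ S ω} ≤ P (A k) := by
      intro k hk
      refine measure_mono fun ω hω => ?_
      simp only [Set.mem_setOf_eq] at hω
      simp only [hA, Set.mem_setOf_eq]
      refine lt_of_lt_of_le (lt_of_lt_of_le (ENNReal.coe_lt_coe.mpr ?_) hω) le_rfl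
      calc (k : ℝ≥0) * h < ((n : ℝ≥0) + 1) * h := by
            refine mul_lt_mul_of_pos_right ?_ hhpos
            have : (k : ℝ≥0) ≤ (n : ℝ≥0) := by exact_mod_cast hk
            exact lt_of_le_of_lt this (lt_add_of_pos_right _ one_pos)
        _ = ε := hnh
    -- disjointness of the D' k
    have hdisj' : ∀ i j : ℕ, i < j → Disjoint (D i \ Z (i + 1)) (D j \ Z (j + 1)) := by
      intro i j hij
      refine Set.disjoint_left.mpr fun ω hi hj => ?_
      have h1 : S ω ≤ ((((i + 1 : ℕ) : ℝ≥0) * h : ℝ≥0) : ℝ≥0∞) := by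
        have := hi.1.2
        simp only [hA, Set.mem_setOf_eq, not_lt] at this
        exact_mod_cast this
      have h2 : ((((j : ℝ≥0) * h : ℝ≥0)) : ℝ≥0∞) < S ω := by
        have := hj.1.1
        simpa only [hA, Set.mem_setOf_eq] using this
      have h3 : ((((i + 1 : ℕ) : ℝ≥0) * h : ℝ≥0) : ℝ≥0∞) ≤ ((((j : ℝ≥0) * h : ℝ≥0)) : ℝ≥0∞) := by
        push_cast
        gcongr
        exact_mod_cast hij
      exact absurd (lt_of_lt_of_le h2 (le_trans h1 h3)) (lt_irrefl _)
    -- sum over k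
    have hDmeas : ∀ k : ℕ, MeasurableSet (D k \ Z (k + 1)) :=
      fun k => ((hAmeas k).diff (hAmeas (k + 1))).diff (hZmeas (k + 1))
    have hsum : ∑ k ∈ Finset.range (n + 1), P (D k \ Z (k + 1))
        = P (⋃ k ∈ Finset.range (n + 1), D k \ Z (k + 1)) := by
      refine (measure_biUnion_finset ?_ fun k _ => hDmeas k).symm
      intro i _ j _ hij
      rcases (Ne.lt_or_gt hij) with hlt | hlt
      · exact hdisj' i j hlt
      · exact (hdisj' j i hlt).symm
    have hcover : (⋃ k ∈ Finset.range (n + 1), D k \ Z (k + 1))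
        ⊆ {ω | S ω < lifetime X ω ∧ lifetime X ω < S ω + ((h : ℝ≥0) : ℝ≥0∞)}
          ∪ {ω | lifetime X ω ≤ S ω} := by
      intro ω hω
      simp only [Set.mem_iUnion] at hω
      obtain ⟨k, -, hωk⟩ := hω
      by_cases hzs : lifetime X ω ≤ S ω
      · exact Or.inr hzs
      · refine Or.inl ⟨not_le.mp hzs, ?_⟩
        have hD1 : ((((k : ℝ≥0) * h : ℝ≥0)) : ℝ≥0∞) < S ω := by
          have := hωk.1.1
          simpa only [hA, Set.mem_setOf_eq] using this
        have hD3 : lifetime X ω ≤ ((((k : ℝ≥0) * h + h : ℝ≥0)) : ℝ≥0∞) := by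
          have := hωk.2
          simp only [hZ, Set.mem_setOf_eq, not_lt] at this
          rwa [hcast k] at this
        calc lifetime X ω ≤ ((((k : ℝ≥0) * h + h : ℝ≥0)) : ℝ≥0∞) := hD3
          _ = ((((k : ℝ≥0) * h : ℝ≥0)) : ℝ≥0∞) + ((h : ℝ≥0) : ℝ≥0∞) := by
              rw [ENNReal.coe_add]
          _ < S ω + ((h : ℝ≥0) : ℝ≥0∞) :=
              ENNReal.add_lt_add_right ENNReal.coe_ne_top hD1
    have hfhpow : (P {ω | X h ω ≠ none}) ^ (n + 1) = P {ω | X ε ω ≠ none} := by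
      rw [← pow_step hX h hhpos (n + 1)]
      congr 1
      have hc : ((n + 1 : ℕ) : ℝ≥0) * h = ε := by push_cast; exact hnh
      rw [hc, set_lt_lifetime_eq hX hε]
      rfl
    calc P {ω | (ε : ℝ≥0∞) ≤ S ω} * (1 - P {ω | X ε ω ≠ none})
        = P {ω | (ε : ℝ≥0∞) ≤ S ω} * (1 - (P {ω | X h ω ≠ none}) ^ (n + 1)) := by
          rw [hfhpow]
      _ ≤ P {ω | (ε : ℝ≥0∞) ≤ S ω} * (((n + 1 : ℕ) : ℝ≥0∞) * (1 - P {ω | X h ω ≠ none})) :=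
          mul_le_mul_right (one_sub_pow_le _ hfh_le (n + 1)) _
      _ = ∑ _k ∈ Finset.range (n + 1), P {ω | (ε : ℝ≥0∞) ≤ S ω} * (1 - P {ω | X h ω ≠ none}) := by
          rw [Finset.sum_const, Finset.card_range, nsmul_eq_mul]; push_cast; ring
      _ ≤ ∑ k ∈ Finset.range (n + 1), P (D k \ Z (k + 1)) := by
          refine Finset.sum_le_sum fun k hk => ?_
          rw [eqk k]
          exact mul_le_mul_left (hple k (Nat.lt_succ_iff.mp (Finset.mem_range.mp hk))) _
      _ = P (⋃ k ∈ Finset.range (n + 1), D k \ Z (k + 1)) := hsum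
      _ ≤ P ({ω | S ω < lifetime X ω ∧ lifetime X ω < S ω + ((h : ℝ≥0) : ℝ≥0∞)}
            ∪ {ω | lifetime X ω ≤ S ω}) := measure_mono hcover
      _ ≤ P {ω | S ω < lifetime X ω ∧ lifetime X ω < S ω + ((h : ℝ≥0) : ℝ≥0∞)}
            + P {ω | lifetime X ω ≤ S ω} := measure_union_le _ _
      _ = P {ω | S ω < lifetime X ω ∧ lifetime X ω < S ω + ((h : ℝ≥0) : ℝ≥0∞)} := by
          rw [hnull, add_zero]
  -- pass to the limit
  set T : ℕ → Set Ω := fun m => {ω | S ω < lifetime X ω ∧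
      lifetime X ω < S ω + ((ε / ((m : ℝ≥0) + 1) : ℝ≥0) : ℝ≥0∞)} with hT
  have hTmeas : ∀ m : ℕ, MeasurableSet (T m) := by
    intro m
    have m1 : MeasurableSet {ω | S ω < lifetime X ω} :=
      measurableSet_lt (measurable_stopping hS) (measurable_lifetime hX)
    have m2 : MeasurableSet {ω | lifetime X ω
        < S ω + ((ε / ((m : ℝ≥0) + 1) : ℝ≥0) : ℝ≥0∞)} :=
      measurableSet_lt (measurable_lifetime hX) ((measurable_stopping hS).add measurable_const)
    exact m1.inter m2
  have hanti : Antitone T := by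
    intro a b hab ω hω
    obtain ⟨h1, h2⟩ := hω
    refine ⟨h1, lt_of_lt_of_le h2 (add_le_add le_rfl (ENNReal.coe_le_coe.mpr ?_))⟩
    gcongr
  have hint : ⋂ m, T m = ∅ := by
    ext ω
    simp only [hT, Set.mem_iInter, Set.mem_setOf_eq, Set.mem_empty_iff_false, iff_false]
    intro hall
    have h1 : S ω < lifetime X ω := (hall 0).1
    have h2 : lifetime X ω ≤ S ω := by
      refine ENNReal.le_of_forall_pos_le_add fun δ hδ _ => ?_
      obtain ⟨m, hm⟩ := exists_nat_gt (ε / δ)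
      have hdm : ε / ((m : ℝ≥0) + 1) ≤ δ := by
        rw [div_le_iff₀ (by positivity : (0:ℝ≥0) < (m : ℝ≥0) + 1)]
        have : ε ≤ (m : ℝ≥0) * δ := by
          rw [← div_le_iff₀ hδ] at *
          exact hm.le
        calc ε ≤ (m : ℝ≥0) * δ := this
          _ ≤ δ * ((m : ℝ≥0) + 1) := by rw [mul_comm]; gcongr; exact le_self_add
      exact le_trans (le_of_lt (hall m).2) (add_le_add le_rfl (ENNReal.coe_le_coe.mpr hdm))
    exact absurd h2 (not_le.mpr h1)
  have htend : Tendsto (fun m => P (T m)) atTop (nhds 0) := by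
    have ht := MeasureTheory.tendsto_measure_iInter_atTop (μ := P)
      (fun m => (hTmeas m).nullMeasurableSet) hanti ⟨0, measure_ne_top _ _⟩
    rw [hint] at ht
    simpa [Function.comp_def] using ht
  have hle0 : P {ω | (ε : ℝ≥0∞) ≤ S ω} * (1 - P {ω | X ε ω ≠ none}) ≤ 0 :=
    ge_of_tendsto htend (Filter.Eventually.of_forall main)
  rcases mul_eq_zero.mp (le_antisymm hle0 zero_le) with h | h
  · exact absurd h hp.ne'
  · exact absurd (tsub_eq_zero_iff_le.mp h) (not_le.mpr hf1)

end
end
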